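/- arXiv:2212.02954 — 2 statements merged into one kernel-verified Lean document; each statement's English description precedes it below -/
import Mathlib

section
/- Let Y be a real vector space, L : Y × Y → ℝ a function of the form L(u,z) = J(u) + F(z) − B(u)(z) with J, F linear and B bilinear, and let Y₀ ⊆ Y be a subspace. If (u,z) ∈ Y × Y is a stationary point of L on Y and (u₀,z₀) ∈ Y₀ × Y₀ is a stationary point of L restricted to Y₀ × Y₀, then J(u) − J(u₀) = ½·ρ(u₀)(z − z̃) + ½·ρ*(u₀,z₀)(u − ũ) for arbitrary z̃, ũ ∈ Y₀, where ρ(u₀)(φ) := F(φ) − B(u₀)(φ) and ρ*(u₀,z₀)(φ) := J(φ) − B(φ)(z₀). (For bilinear B and linear J the remainder term vanishes.) -/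
/-- DWR error identity in the linear setting: the goal error is half the primal
residual at the dual weight plus half the dual residual at the primal weight. -/
theorem dwr_error_identity_linear
    {Y : Type*} [AddCommGroup Y] [Module ℝ Y] (Y₀ : Submodule ℝ Y)
    (J F : Y →ₗ[ℝ] ℝ) (B : Y →ₗ[ℝ] Y →ₗ[ℝ] ℝ)
    (u z u₀ z₀ : Y) (hu₀ : u₀ ∈ Y₀) (hz₀ : z₀ ∈ Y₀)
    (hprimal : ∀ φ : Y, B u φ = F φ)
    (hdual : ∀ φ : Y, B φ z = J φ)
    (hprimal₀ : ∀ φ ∈ Y₀, B u₀ φ = F φ)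
    (hdual₀ : ∀ φ ∈ Y₀, B φ z₀ = J φ) :
    ∀ zt ∈ Y₀, ∀ ut ∈ Y₀,
      J u - J u₀ =
        (1/2) * (F (z - zt) - B u₀ (z - zt)) + (1/2) * (J (u - ut) - B (u - ut) z₀) := by
  intro zt hzt ut hut
  have h1 : F z = J u := by rw [← hprimal z, hdual]
  have h2 : F zt = B u₀ zt := (hprimal₀ zt hzt).symm
  have h3 : B u₀ z = J u₀ := hdual u₀
  have h4 : J ut = B ut z₀ := (hdual₀ ut hut).symm
  have h5 : B u z₀ = J u₀ := by rw [hprimal z₀, ← hprimal₀ z₀ hz₀, hdual₀ u₀ hu₀]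
  simp only [map_sub, LinearMap.sub_apply, h1, h2, h3, h4, h5]
  ring
end

section
/- Let B be a bilinear form on a vector space Y, F, J linear functionals, and let u, u₀ solve B(u)(φ) = F(φ) for all φ ∈ Y and B(u₀)(φ₀) = F(φ₀) for all φ₀ in a subspace Y₀. If z solves the dual problem B(φ)(z) = J(φ) for all φ ∈ Y, then for every z̃ ∈ Y₀: J(u) − J(u₀) = ρ(u₀)(z − z̃), where ρ(u₀)(φ) = F(φ) − B(u₀)(φ). In particular the goal error equals the primal residual applied to the dual weight z − z̃. -/
/-- Goal error equals the primal residual applied to the dual weight `z − zt`. -/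
theorem dwr_primal_residual_representation
    {Y : Type*} [AddCommGroup Y] [Module ℝ Y] (Y₀ : Submodule ℝ Y)
    (J F : Y →ₗ[ℝ] ℝ) (B : Y →ₗ[ℝ] Y →ₗ[ℝ] ℝ)
    (u u₀ z : Y) (hu₀ : u₀ ∈ Y₀)
    (hprimal : ∀ φ : Y, B u φ = F φ)
    (hprimal₀ : ∀ φ ∈ Y₀, B u₀ φ = F φ)
    (hdual : ∀ φ : Y, B φ z = J φ) :
    ∀ zt ∈ Y₀, J u - J u₀ = F (z - zt) - B u₀ (z - zt) := by
  intro zt hzt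
  have h1 : J u = F z := by rw [← hdual u, hprimal z]
  have h2 : J u₀ = (B u₀) z := (hdual u₀).symm
  have h3 : (B u₀) zt = F zt := hprimal₀ zt hzt
  simp [map_sub, h1, h2, h3]
end
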